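/- Let 0 ≤ x₁ < x₂ ≤ 1. (i) If V_{x₁}^{x₂}(Γ̂) ≥ Γ̂(x₁) + Γ̂(x₂), then V_{x₁}^{x}(Γ̂) ≥ Γ̂(x₁) + Γ̂(x) for every x ∈ [x₂, 1]. (ii) If V_{x₁}^{x₂}(Γ̃) ≥ Γ̃(x₁) + Γ̃(x₂), then V_{x₁}^{x}(Γ̃) ≥ Γ̃(x₁) + Γ̃(x) for every x ∈ [x₂, 1]. -/

import Mathlib

open Set MeasureTheory

/-- `Γ̂(t) = t - Γ(t)`. -/
def Ghat (Γ : ℝ → ℝ) : ℝ → ℝ := fun t => t - Γ t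

/-- `Γ̃(t) = φ(t) - Γ(t)`. -/
def Gtil (φ Γ : ℝ → ℝ) : ℝ → ℝ := fun t => φ t - Γ t

/-- The (signed) total variation `V_a^b(f)` of `f` on `[a, b] ⊆ [0, 1]`, with
the conventions `V_b^a(f) = -V_a^b(f)` and `V_a^a(f) = 0`. -/
noncomputable def sV (f : ℝ → ℝ) (a b : ℝ) : ℝ := variationOnFromTo f (Set.Icc 0 1) a b

/-- `f₁(x, y) = x - (1/2) (V_{φ⁻¹(y)}^x(Γ̂) + Γ̂(x) + Γ̂(φ⁻¹(y)))`, where `ψ = φ⁻¹`. -/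
noncomputable def f1 (ψ Γ : ℝ → ℝ) (x y : ℝ) : ℝ :=
  x - (1/2) * (sV (Ghat Γ) (ψ y) x + Ghat Γ x + Ghat Γ (ψ y))

/-- `f₂(x, y) = y - (1/2) (V_x^{φ⁻¹(y)}(Γ̃) + Γ̃(x) + Γ̃(φ⁻¹(y)))`, where `ψ = φ⁻¹`. -/
noncomputable def f2 (φ ψ Γ : ℝ → ℝ) (x y : ℝ) : ℝ :=
  y - (1/2) * (sV (Gtil φ Γ) x (ψ y) + Gtil φ Γ x + Gtil φ Γ (ψ y))

/-- `C₁(x, y) = min {x, y, f₁(x, y)}`. -/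
noncomputable def C1 (ψ Γ : ℝ → ℝ) (x y : ℝ) : ℝ := min x (min y (f1 ψ Γ x y))

/-- `C₂(x, y) = min {x, y, f₂(x, y)}`. -/
noncomputable def C2 (φ ψ Γ : ℝ → ℝ) (x y : ℝ) : ℝ := min x (min y (f2 φ ψ Γ x y))

/-- The φ-splice `C₂ ▵_φ C₁`: equal to `C₁` when `y ≤ φ(x)`, to `C₂` when `y ≥ φ(x)`. -/
noncomputable def splice (φ ψ Γ : ℝ → ℝ) (x y : ℝ) : ℝ :=
  if y ≤ φ x then C1 ψ Γ x y else C2 φ ψ Γ x y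

/-- A copula on `[0,1]²`: boundary conditions and 2-increasingness. -/
def IsCopula (C : ℝ → ℝ → ℝ) : Prop :=
  (∀ x ∈ Set.Icc (0:ℝ) 1, ∀ y ∈ Set.Icc (0:ℝ) 1, C x y ∈ Set.Icc (0:ℝ) 1) ∧
  (∀ x ∈ Set.Icc (0:ℝ) 1, C x 0 = 0 ∧ C 0 x = 0 ∧ C x 1 = x ∧ C 1 x = x) ∧
  (∀ x₁ x₂ y₁ y₂ : ℝ, x₁ ∈ Set.Icc (0:ℝ) 1 → x₂ ∈ Set.Icc (0:ℝ) 1 →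
    y₁ ∈ Set.Icc (0:ℝ) 1 → y₂ ∈ Set.Icc (0:ℝ) 1 → x₁ ≤ x₂ → y₁ ≤ y₂ →
    0 ≤ C x₂ y₂ - C x₂ y₁ - C x₁ y₂ + C x₁ y₁)

/-- The greatest quasi-copula `A_Γ` with curvilinear section `Γ` (`ψ = φ⁻¹`). -/
noncomputable def AG (φ ψ Γ : ℝ → ℝ) (x y : ℝ) : ℝ :=
  if y ≤ φ x then min y (x - sSup (Ghat Γ '' Set.Icc (ψ y) x))
  else min x (y - sSup (Gtil φ Γ '' Set.Icc x (ψ y)))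

/-- Variation of a difference is at most the sum of the variations. -/
lemma evar_sub_le (f g : ℝ → ℝ) (s : Set ℝ) :
    eVariationOn (fun t => f t - g t) s ≤ eVariationOn f s + eVariationOn g s := by
  apply iSup_le
  rintro ⟨n, u, hu, us⟩
  calc ∑ i ∈ Finset.range n, edist (f (u (i+1)) - g (u (i+1))) (f (u i) - g (u i))
      ≤ ∑ i ∈ Finset.range n,
          (edist (f (u (i+1))) (f (u i)) + edist (g (u (i+1))) (g (u i))) := by
        refine Finset.sum_le_sum fun i _ => ?_
        calc edist (f (u (i+1)) - g (u (i+1))) (f (u i) - g (u i))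
            = edist (f (u (i+1)) + -g (u (i+1))) (f (u i) + -g (u i)) := by
              simp [sub_eq_add_neg]
          _ ≤ edist (f (u (i+1))) (f (u i)) + edist (-g (u (i+1))) (-g (u i)) :=
              edist_add_add_le _ _ _ _
          _ = edist (f (u (i+1))) (f (u i)) + edist (g (u (i+1))) (g (u i)) := by
              rw [edist_neg_neg]
    _ = (∑ i ∈ Finset.range n, edist (f (u (i+1))) (f (u i)))
        + ∑ i ∈ Finset.range n, edist (g (u (i+1))) (g (u i)) := Finset.sum_add_distrib
    _ ≤ eVariationOn f s + eVariationOn g s :=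
        add_le_add (eVariationOn.sum_le (f := f) (n := n) hu us) (eVariationOn.sum_le (f := g) (n := n) hu us)

lemma lbv_sub {f g : ℝ → ℝ} {s : Set ℝ} (hf : LocallyBoundedVariationOn f s)
    (hg : LocallyBoundedVariationOn g s) :
    LocallyBoundedVariationOn (fun t => f t - g t) s := fun a b ha hb =>
  ne_top_of_le_ne_top (ENNReal.add_ne_top.2 ⟨hf a b ha hb, hg a b ha hb⟩)
    (evar_sub_le f g _)

/-- The key step, abstractly. -/
lemma key_step {f : ℝ → ℝ} (hf : LocallyBoundedVariationOn f (Set.Icc 0 1))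
    {x₁ x₂ : ℝ} (hx₁ : x₁ ∈ Set.Icc (0:ℝ) 1) (hx₂ : x₂ ∈ Set.Icc (0:ℝ) 1)
    (h : sV f x₁ x₂ ≥ f x₁ + f x₂) :
    ∀ x ∈ Set.Icc x₂ 1, sV f x₁ x ≥ f x₁ + f x := by
  intro x hx
  have hxmem : x ∈ Set.Icc (0:ℝ) 1 := ⟨hx₂.1.trans hx.1, hx.2⟩
  have hadd : sV f x₁ x₂ + sV f x₂ x = sV f x₁ x :=
    variationOnFromTo.add hf hx₁ hx₂ hxmem
  have hmon := variationOnFromTo.sub_self_monotoneOn hf hx₂ hx₂ hxmem hx.1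
  simp only [Pi.sub_apply, variationOnFromTo.self] at hmon
  have : f x - f x₂ ≤ sV f x₂ x := by
    have := hmon
    unfold sV
    linarith
  linarith

theorem stmt_12
    (φ Γ : ℝ → ℝ)
    (hφcont : ContinuousOn φ (Set.Icc 0 1))
    (hφmono : StrictMonoOn φ (Set.Icc 0 1))
    (hφ0 : φ 0 = 0) (hφ1 : φ 1 = 1)
    (hΓrange : ∀ t ∈ Set.Icc (0:ℝ) 1, max 0 (t + φ t - 1) ≤ Γ t ∧ Γ t ≤ min t (φ t))
    (hΓlip : ∀ t₁ t₂ : ℝ, t₁ ∈ Set.Icc (0:ℝ) 1 → t₂ ∈ Set.Icc (0:ℝ) 1 → t₁ ≤ t₂ →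
      0 ≤ Γ t₂ - Γ t₁ ∧ Γ t₂ - Γ t₁ ≤ (t₂ - t₁) + (φ t₂ - φ t₁))
    (x₁ x₂ : ℝ) (hx₁ : x₁ ∈ Set.Icc (0:ℝ) 1) (hx₂ : x₂ ∈ Set.Icc (0:ℝ) 1) (hlt : x₁ < x₂) :
    (sV (Ghat Γ) x₁ x₂ ≥ Ghat Γ x₁ + Ghat Γ x₂ →
      ∀ x ∈ Set.Icc x₂ 1, sV (Ghat Γ) x₁ x ≥ Ghat Γ x₁ + Ghat Γ x) ∧
    (sV (Gtil φ Γ) x₁ x₂ ≥ Gtil φ Γ x₁ + Gtil φ Γ x₂ →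
      ∀ x ∈ Set.Icc x₂ 1, sV (Gtil φ Γ) x₁ x ≥ Gtil φ Γ x₁ + Gtil φ Γ x) := by
  have hΓmono : MonotoneOn Γ (Set.Icc 0 1) := fun a ha b hb hab => by
    linarith [(hΓlip a b ha hb hab).1]
  have hΓbv : LocallyBoundedVariationOn Γ (Set.Icc 0 1) :=
    hΓmono.locallyBoundedVariationOn
  have hid : MonotoneOn (fun t : ℝ => t) (Set.Icc 0 1) := fun a _ b _ hab => hab
  have hGhat : LocallyBoundedVariationOn (Ghat Γ) (Set.Icc 0 1) :=
    lbv_sub hid.locallyBoundedVariationOn hΓbv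
  have hGtil : LocallyBoundedVariationOn (Gtil φ Γ) (Set.Icc 0 1) :=
    lbv_sub hφmono.monotoneOn.locallyBoundedVariationOn hΓbv
  exact ⟨fun h => key_step hGhat hx₁ hx₂ h, fun h => key_step hGtil hx₁ hx₂ h⟩
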